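/- Let Lambda be a free abelian group of rank 2k with basis h_1, …, h_{2k} equipped with a skew-symmetric bilinear pairing · which is unimodular (nondegenerate with the induced map Lambda → Hom(Lambda, Z) an isomorphism). Let Ghat be the group of pairs (m, h) in (1/2)Z × Lambda with multiplication (m,h)·(m',h') = (m + m' + h·h', h + h'), let lambda = (1,0) and gamma_i = (-1/2, h_i), and let G be the subgroup of Ghat generated by lambda and gamma_1, …, gamma_{2k}. Then for each i, the automorphism psi of G determined by psi(lambda) = lambda, psi(gamma_i) = lambda^2·gamma_i, and psi(gamma_j) = gamma_j for all j ≠ i, is an inner automorphism of G. -/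

import Mathlib

/-!
Statement 16: Let `Λ` be a free abelian group of rank `2k` with basis
`h₁, …, h_{2k}` and a unimodular skew-symmetric bilinear pairing `·`.  Let `Ĝ`
be the group whose underlying set is `(½ℤ) × Λ` (here modelled as `ℚ × Λ`, with
the elements of `Ĝ` that actually occur all lying in `(½ℤ) × Λ`) with
multiplication `(m, h)·(m', h') = (m + m' + h·h', h + h')`, let `λ = (1,0)`,
`γᵢ = (-1/2, hᵢ)`, and let `G ≤ Ĝ` be the subgroup generated by `λ` and the
`γᵢ`.  Then for each `i`, the endomorphism `ψ` of `G` determined by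
`ψ(λ) = λ`, `ψ(γᵢ) = λ²·γᵢ` and `ψ(γⱼ) = γⱼ` for `j ≠ i` is an inner
automorphism of `G`.
-/

theorem statement16 (k : ℕ) {Λ : Type*} [AddCommGroup Λ]
    (bΛ : Module.Basis (Fin (2 * k)) ℤ Λ)
    (B : Λ →ₗ[ℤ] Λ →ₗ[ℤ] ℤ)
    (skew : ∀ x y : Λ, B x y = - B y x)
    (unimod : Function.Bijective (fun x => (B x : Λ →ₗ[ℤ] ℤ)))
    -- the group `Ĝ` of pairs `(m, h)` with the twisted multiplication
    {Ghat : Type*} [Group Ghat] (e : ℚ × Λ ≃ Ghat)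
    (he : ∀ p q : ℚ × Λ,
      e p * e q = e (p.1 + q.1 + ((B p.2 q.2 : ℤ) : ℚ), p.2 + q.2))
    -- the distinguished elements and the subgroup they generate
    (lam : Ghat) (hlam : lam = e (1, 0))
    (γ : Fin (2 * k) → Ghat) (hγ : ∀ i, γ i = e (-(1/2 : ℚ), bΛ i))
    (G : Subgroup Ghat) (hG : G = Subgroup.closure ({lam} ∪ Set.range γ))
    (hlamG : lam ∈ G) (hγG : ∀ i, γ i ∈ G)
    -- `ψ` is the endomorphism of `G` determined by the values below
    (i : Fin (2 * k)) (ψ : G →* G)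
    (hψlam : ψ ⟨lam, hlamG⟩ = ⟨lam, hlamG⟩)
    (hψi : ψ ⟨γ i, hγG i⟩ = ⟨lam, hlamG⟩ ^ 2 * ⟨γ i, hγG i⟩)
    (hψj : ∀ j, j ≠ i → ψ ⟨γ j, hγG j⟩ = ⟨γ j, hγG j⟩) :
    -- conclusion: `ψ` is an inner automorphism of `G`
    ∃ g : G, ∀ x : G, ψ x = g * x * g⁻¹ := by
  classical
  -- basic facts about the twisted multiplication
  have hBzero : ∀ h : Λ, B h h = 0 := fun h => by have := skew h h; omega
  have hone : e (0, 0) = 1 := by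
    have h1 : e ((0 : ℚ), (0 : Λ)) * e (0, 0) = e (0, 0) * 1 := by
      rw [he, mul_one]; simp
    exact mul_left_cancel h1
  have hinv : ∀ (m : ℚ) (h : Λ), (e (m, h))⁻¹ = e (-m, -h) := by
    intro m h
    refine inv_eq_of_mul_eq_one_right ?_
    rw [he]
    have hp : ((m + -m + ((B h (-h) : ℤ) : ℚ), h + -h) : ℚ × Λ) = ((0 : ℚ), (0 : Λ)) := by
      have : B h (-h) = 0 := by rw [map_neg, hBzero]; ring
      rw [this]; simp
    rw [hp, hone]
  have hconj : ∀ (m : ℚ) (y : Λ) (p : ℚ × Λ),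
      e (m, y) * e p * (e (m, y))⁻¹ = e (p.1 + 2 * ((B y p.2 : ℤ) : ℚ), p.2) := by
    intro m y p
    rw [hinv, he, he]
    congr 1
    have h1 : B p.2 y = - B y p.2 := skew p.2 y
    have h2 : B y y = 0 := hBzero y
    refine Prod.ext ?_ (by simp)
    show m + p.1 + ((B y p.2 : ℤ) : ℚ) + -m + ((B (y + p.2) (-y) : ℤ) : ℚ)
        = p.1 + 2 * ((B y p.2 : ℤ) : ℚ)
    have h3 : B (y + p.2) (-y) = B y p.2 := by
      rw [map_add, LinearMap.add_apply, map_neg, map_neg, h2, h1]; ring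
    rw [h3]; ring
  -- the element `y` dual to the basis vector `h_i`
  obtain ⟨y, hy⟩ := unimod.2 (bΛ.coord i)
  have hBy : ∀ j, B y (bΛ j) = if j = i then 1 else 0 := by
    intro j
    have h1 : B y (bΛ j) = bΛ.coord i (bΛ j) := by
      rw [show (B y : Λ →ₗ[ℤ] ℤ) = bΛ.coord i from hy]
    rw [h1, Module.Basis.coord_apply, Module.Basis.repr_self, Finsupp.single_apply]
  -- the conjugating element `g`
  have hsnd1 : (e.symm (1 : Ghat)).2 = 0 := by rw [← hone, e.symm_apply_apply]
  have hsndmul : ∀ a b : Ghat, (e.symm (a * b)).2 = (e.symm a).2 + (e.symm b).2 := by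
    intro a b
    conv_lhs => rw [← e.apply_symm_apply a, ← e.apply_symm_apply b, he,
      e.symm_apply_apply]
  have hsndinv : ∀ a : Ghat, (e.symm a⁻¹).2 = -(e.symm a).2 := by
    intro a
    conv_lhs => rw [← e.apply_symm_apply a,
      show e.symm a = ((e.symm a).1, (e.symm a).2) from rfl, hinv, e.symm_apply_apply]
  let S : AddSubgroup Λ :=
    { carrier := {z | ∃ g ∈ G, (e.symm g).2 = z}
      zero_mem' := ⟨1, one_mem G, hsnd1⟩
      add_mem' := by
        rintro a b ⟨x, hx, hxe⟩ ⟨z, hz, hze⟩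
        exact ⟨x * z, mul_mem hx hz, by rw [hsndmul, hxe, hze]⟩
      neg_mem' := by
        rintro a ⟨x, hx, hxe⟩
        exact ⟨x⁻¹, inv_mem hx, by rw [hsndinv, hxe]⟩ }
  have hyS : y ∈ S := by
    have h3 : (∑ j, bΛ.repr y j • bΛ j) ∈ S :=
      sum_mem fun j _ => zsmul_mem
        (show bΛ j ∈ S from ⟨γ j, hγG j, by rw [hγ j, e.symm_apply_apply]⟩) _
    rwa [bΛ.sum_repr y] at h3
  obtain ⟨g, hgG, hsndg⟩ := hyS
  have hge : g = e ((e.symm g).1, y) := by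
    rw [← hsndg]; exact (e.apply_symm_apply g).symm
  have hconjg : ∀ p : ℚ × Λ, g * e p * g⁻¹ = e (p.1 + 2 * ((B y p.2 : ℤ) : ℚ), p.2) := by
    intro p
    rw [hge]; exact hconj _ _ _
  -- conjugation on the generators
  have hclam : g * lam * g⁻¹ = lam := by
    rw [hlam, hconjg]
    norm_num
  have hcγ : ∀ j, g * γ j * g⁻¹ = e (-(1/2 : ℚ) + 2 * ((B y (bΛ j) : ℤ) : ℚ), bΛ j) := by
    intro j
    rw [hγ j]
    exact hconjg _
  have hcγi : g * γ i * g⁻¹ = lam ^ 2 * γ i := by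
    rw [hcγ i, show B y (bΛ i) = 1 by rw [hBy]; simp, sq, hlam, hγ i, he, he]
    congr 1
    refine Prod.ext ?_ (by simp)
    simp only [map_zero, LinearMap.zero_apply]
    norm_num
  have hcγj : ∀ j, j ≠ i → g * γ j * g⁻¹ = γ j := by
    intro j hj
    rw [hcγ j, show B y (bΛ j) = 0 by rw [hBy, if_neg hj], hγ j]
    norm_num
  -- the key induction
  subst hG
  have key : ∀ (x : Ghat) (hx : x ∈ Subgroup.closure ({lam} ∪ Set.range γ)),
      (ψ ⟨x, hx⟩ : Ghat) = g * x * g⁻¹ := by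
    intro x hx
    induction hx using Subgroup.closure_induction with
    | mem z hz =>
      rcases hz with hz | ⟨j, rfl⟩
      · rcases hz with rfl
        rw [show (⟨z, _⟩ : Subgroup.closure ({z} ∪ Set.range γ)) = ⟨z, hlamG⟩ from rfl,
          hψlam]
        exact hclam.symm
      · by_cases hji : j = i
        · subst hji
          rw [show (⟨γ j, _⟩ : Subgroup.closure ({lam} ∪ Set.range γ)) = ⟨γ j, hγG j⟩ from rfl,
            hψi]
          exact hcγi.symm
        · rw [show (⟨γ j, _⟩ : Subgroup.closure ({lam} ∪ Set.range γ)) = ⟨γ j, hγG j⟩ from rfl,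
            hψj j hji]
          exact (hcγj j hji).symm
    | one =>
      rw [show (⟨1, _⟩ : Subgroup.closure ({lam} ∪ Set.range γ)) = 1 from rfl, map_one]
      simp
    | mul a b ha hb iha ihb =>
      rw [show (⟨a * b, _⟩ : Subgroup.closure ({lam} ∪ Set.range γ)) = ⟨a, ha⟩ * ⟨b, hb⟩ from rfl,
        map_mul]
      push_cast
      rw [iha, ihb]
      group
    | inv a ha iha =>
      rw [show (⟨a⁻¹, _⟩ : Subgroup.closure ({lam} ∪ Set.range γ)) = (⟨a, ha⟩)⁻¹ from rfl,
        map_inv]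
      push_cast
      rw [iha]
      group
  refine ⟨⟨g, hgG⟩, fun x => ?_⟩
  have hx2 := x.2
  have := key x.1 x.2
  apply Subtype.ext
  push_cast
  rw [show (⟨x.1, x.2⟩ : Subgroup.closure ({lam} ∪ Set.range γ)) = x from rfl] at this
  exact this
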